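/- Let J_n be the number of CCD subsets of V(P_n) and let F_i denote the Fibonacci numbers with F_0 = 0, F_1 = 1. Then J_{k+1} = 2(F_k + 1) for all k ≥ 0. -/

import Mathlib

open Finset

variable {V : Type*} [Fintype V] [DecidableEq V]

/-- Number of neighbours of `v` inside the set `S`. -/
def nbrsIn (G : SimpleGraph V) [DecidableRel G.Adj] (S : Finset V) (v : V) : ℕ :=
  (S.filter (fun u => G.Adj v u)).card

/-- `H` is complementary component dominant (CCD). -/
def CCD (G : SimpleGraph V) [DecidableRel G.Adj] (H : Finset V) : Prop :=
  (∀ x y, G.Adj x y → x ∈ H → y ∈ H → nbrsIn G Hᶜ x = nbrsIn G Hᶜ y) ∧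
  (∀ u v, G.Adj u v → u ∉ H → v ∉ H → nbrsIn G H u = nbrsIn G H v)

/-- The path graph on `n` vertices `0, 1, …, n-1`. -/
def pathG (n : ℕ) : SimpleGraph (Fin n) where
  Adj i j := i.val + 1 = j.val ∨ j.val + 1 = i.val
  symm := ⟨by intro i j h; tauto⟩
  loopless := ⟨by intro i h; rcases h with h | h <;> omega⟩

instance (n : ℕ) : DecidableRel (pathG n).Adj :=
  fun i j => inferInstanceAs (Decidable (i.val + 1 = j.val ∨ j.val + 1 = i.val))

/-- The number of CCD subsets of `P_n` (including `∅` and the full vertex set). -/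
noncomputable def J (n : ℕ) : ℕ := Nat.card {H : Finset (Fin n) // CCD (pathG n) H}

lemma nbrsIn_path {n : ℕ} (S : Finset (Fin n)) (i : ℕ) (hi : i < n) :
    nbrsIn (pathG n) S ⟨i, hi⟩ =
      (if 0 < i ∧ (⟨i-1, Nat.lt_of_le_of_lt (Nat.sub_le i 1) hi⟩ : Fin n) ∈ S then 1 else 0) +
      (if h : i+1 < n then (if (⟨i+1, h⟩ : Fin n) ∈ S then 1 else 0) else 0) := by
  classical
  unfold nbrsIn
  rw [Finset.card_filter]
  have : ∀ u : Fin n, (if (pathG n).Adj ⟨i, hi⟩ u then (1:ℕ) else 0) =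
      (if u.val + 1 = i then 1 else 0) + (if i + 1 = u.val then 1 else 0) := by
    intro u
    show (if (i + 1 = u.val ∨ u.val + 1 = i) then (1:ℕ) else 0) = _
    split_ifs <;> omega
  rw [Finset.sum_congr rfl (fun u _ => this u), Finset.sum_add_distrib]
  congr 1
  · rcases Nat.eq_zero_or_pos i with h0 | h0
    · subst h0; simp
    · have : ∀ u : Fin n, (u.val + 1 = i) = (u = ⟨i-1, by omega⟩) := by
        intro u; apply propext
        rw [Fin.ext_iff]; simp; omega
      simp only [this]
      rw [Finset.sum_ite_eq' S (⟨i-1, by omega⟩ : Fin n) (fun _ => 1)]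
      simp [h0]
  · rcases Nat.lt_or_ge (i+1) n with h1 | h1
    · have : ∀ u : Fin n, (i + 1 = u.val) = (u = ⟨i+1, h1⟩) := by
        intro u; apply propext
        rw [Fin.ext_iff]; simp; omega
      simp only [this]
      rw [Finset.sum_ite_eq' S (⟨i+1, h1⟩ : Fin n) (fun _ => 1)]
      rw [dif_pos h1]
    · have : ∀ u ∈ S, (if i + 1 = u.val then (1:ℕ) else 0) = 0 := by
        intro u _; have := u.isLt; split_ifs <;> omega
      rw [Finset.sum_congr rfl this, dif_neg (by omega), Finset.sum_const_zero]

/-- unified step lemma: both endpoints of an edge are outside `S`. -/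
lemma step {n : ℕ} (S : Finset (Fin n)) (i : ℕ) (hi : i+1 < n)
    (h1 : (⟨i, by omega⟩ : Fin n) ∉ S) (h2 : (⟨i+1, hi⟩ : Fin n) ∉ S) :
    (nbrsIn (pathG n) S ⟨i, by omega⟩ = nbrsIn (pathG n) S ⟨i+1, hi⟩ ↔
      ((0 < i ∧ (⟨i-1, by omega⟩ : Fin n) ∈ S) ↔
        (i+2 < n ∧ ∀ h : i+2 < n, (⟨i+2, h⟩ : Fin n) ∈ S))) := by
  rw [nbrsIn_path, nbrsIn_path]
  have e1 : (⟨i+1-1, by omega⟩ : Fin n) = ⟨i, by omega⟩ := by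
    apply Fin.ext; simp
  rw [e1]
  rcases Nat.lt_or_ge (i+2) n with h3 | h3
  · rw [dif_pos hi, dif_pos h3]
    by_cases hm : (⟨i+2, h3⟩ : Fin n) ∈ S <;>
      split_ifs <;> simp_all <;> try omega
  · rw [dif_pos hi, dif_neg (by omega)]
    split_ifs <;> simp_all <;> try omega
    all_goals next h => exact iff_of_false (fun hc => h hc.1 hc.2) (by omega)

/-- extension of H's indicator to ℕ -/
def fH {n : ℕ} (H : Finset (Fin n)) : ℕ → Bool :=
  fun i => decide (∃ h : i < n, (⟨i, h⟩ : Fin n) ∈ H)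

def Cc (n : ℕ) (f : ℕ → Bool) : Prop :=
  ∀ i, i + 1 < n → f i = f (i+1) →
    ((0 < i ∧ f (i-1) ≠ f i) ↔ (i + 2 < n ∧ f (i+2) ≠ f i))

lemma fH_eq_iff {n : ℕ} (H : Finset (Fin n)) {i j : ℕ} (hi : i < n) (hj : j < n) :
    (fH H i = fH H j) ↔ ((⟨i, hi⟩ : Fin n) ∈ H ↔ (⟨j, hj⟩ : Fin n) ∈ H) := by
  simp [fH, decide_eq_decide, hi, hj]

lemma fH_true_iff {n : ℕ} (H : Finset (Fin n)) {i : ℕ} (hi : i < n) :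
    (fH H i = true) ↔ (⟨i, hi⟩ : Fin n) ∈ H := by
  simp [fH, hi]

lemma nbrs_iff {n : ℕ} (H S : Finset (Fin n)) (i : ℕ) (hi : i+1 < n)
    (hS : ∀ j (hj : j < n), ((⟨j, hj⟩ : Fin n) ∈ S ↔ fH H j ≠ fH H i))
    (h1 : (⟨i, by omega⟩ : Fin n) ∉ S) (h2 : (⟨i+1, hi⟩ : Fin n) ∉ S) :
    (nbrsIn (pathG n) S ⟨i, by omega⟩ = nbrsIn (pathG n) S ⟨i+1, hi⟩) ↔
    ((0 < i ∧ fH H (i-1) ≠ fH H i) ↔ (i + 2 < n ∧ fH H (i+2) ≠ fH H i)) := by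
  rw [step S i hi h1 h2]
  constructor
  · intro h
    constructor
    · rintro ⟨h0, hne⟩
      have := h.mp ⟨h0, (hS _ (by omega)).mpr hne⟩
      exact ⟨this.1, (hS _ this.1).mp (this.2 this.1)⟩
    · rintro ⟨h2', hne⟩
      have := h.mpr ⟨h2', fun hh => (hS _ hh).mpr hne⟩
      exact ⟨this.1, (hS _ (by omega)).mp this.2⟩
  · intro h
    constructor
    · rintro ⟨h0, hmem⟩
      have := h.mp ⟨h0, (hS _ (by omega)).mp hmem⟩
      exact ⟨this.1, fun hh => (hS _ hh).mpr this.2⟩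
    · rintro ⟨h2', hmem⟩
      have := h.mpr ⟨h2', (hS _ h2').mp (hmem h2')⟩
      exact ⟨this.1, (hS _ (by omega)).mpr this.2⟩

lemma ccd_iff_Cc {n : ℕ} (H : Finset (Fin n)) :
    CCD (pathG n) H ↔ Cc n (fH H) := by
  constructor
  · rintro ⟨c1, c2⟩ i hi hf
    rw [fH_eq_iff H (by omega) hi] at hf
    by_cases hm : (⟨i, by omega⟩ : Fin n) ∈ H
    · have hm2 : (⟨i+1, hi⟩ : Fin n) ∈ H := hf.mp hm
      have h := c1 ⟨i, by omega⟩ ⟨i+1, hi⟩ (Or.inl rfl) hm hm2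
      rw [step Hᶜ i hi (by simp [hm]) (by simp [hm2])] at h
      simp only [Finset.mem_compl] at h
      constructor
      · rintro ⟨h0, hne⟩
        have : (⟨i-1, by omega⟩ : Fin n) ∉ H := by
          intro hmem
          apply hne
          rw [fH_eq_iff H (by omega) (by omega)]
          simp [hmem, hm]
        have := h.mp ⟨h0, this⟩
        refine ⟨this.1, ?_⟩
        rw [ne_eq, fH_eq_iff H this.1 (show i < n by omega)]
        simp [this.2 this.1, hm]
      · rintro ⟨h2, hne⟩
        have : (⟨i+2, h2⟩ : Fin n) ∉ H := by
          intro hmem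
          apply hne
          rw [fH_eq_iff H h2 (by omega)]
          simp [hmem, hm]
        have := h.mpr ⟨h2, fun _ => this⟩
        refine ⟨this.1, ?_⟩
        rw [ne_eq, fH_eq_iff H (show i-1 < n by omega) (show i < n by omega)]
        simp [this.2, hm]
    · have hm2 : (⟨i+1, hi⟩ : Fin n) ∉ H := fun hh => hm (hf.mpr hh)
      have h := c2 ⟨i, by omega⟩ ⟨i+1, hi⟩ (Or.inl rfl) hm hm2
      rw [step H i hi hm hm2] at h
      constructor
      · rintro ⟨h0, hne⟩
        have : (⟨i-1, by omega⟩ : Fin n) ∈ H := by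
          by_contra hmem
          apply hne
          rw [fH_eq_iff H (by omega) (by omega)]
          simp [hmem, hm]
        have := h.mp ⟨h0, this⟩
        refine ⟨this.1, ?_⟩
        rw [ne_eq, fH_eq_iff H this.1 (show i < n by omega)]
        simp [this.2 this.1, hm]
      · rintro ⟨h2, hne⟩
        have : (⟨i+2, h2⟩ : Fin n) ∈ H := by
          by_contra hmem
          apply hne
          rw [fH_eq_iff H h2 (by omega)]
          simp [hmem, hm]
        have := h.mpr ⟨h2, fun _ => this⟩
        refine ⟨this.1, ?_⟩
        rw [ne_eq, fH_eq_iff H (show i-1 < n by omega) (show i < n by omega)]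
        simp [this.2, hm]
  · intro hc
    have hSc : ∀ i (hilt : i < n), (⟨i, hilt⟩ : Fin n) ∈ H →
        ∀ j (hj : j < n), ((⟨j, hj⟩ : Fin n) ∈ Hᶜ ↔ fH H j ≠ fH H i) := by
      intro i hilt hx j hj
      rw [Finset.mem_compl, ne_eq, fH_eq_iff H hj hilt]
      simp [hx]
    have hSc' : ∀ i (hilt : i < n), (⟨i, hilt⟩ : Fin n) ∉ H →
        ∀ j (hj : j < n), ((⟨j, hj⟩ : Fin n) ∈ H ↔ fH H j ≠ fH H i) := by
      intro i hilt hx j hj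
      rw [ne_eq, fH_eq_iff H hj hilt]
      simp [hx]
    constructor
    · rintro ⟨i, hilt⟩ ⟨j, hjlt⟩ adj hx hy
      rcases adj with h | h
      · have hj : j = i + 1 := h.symm
        subst hj
        have hf : fH H i = fH H (i+1) :=
          (fH_eq_iff H (by omega) hjlt).mpr (iff_of_true hx hy)
        exact (nbrs_iff H Hᶜ i hjlt (hSc i (by omega) hx) (by simp [hx]) (by simp [hy])).mpr
          (hc i hjlt hf)
      · have hj : i = j + 1 := h.symm
        subst hj
        have hf : fH H j = fH H (j+1) :=
          (fH_eq_iff H (by omega) hilt).mpr (iff_of_true hy hx)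
        exact ((nbrs_iff H Hᶜ j hilt (hSc j (by omega) hy) (by simp [hy]) (by simp [hx])).mpr
          (hc j hilt hf)).symm
    · rintro ⟨i, hilt⟩ ⟨j, hjlt⟩ adj hx hy
      rcases adj with h | h
      · have hj : j = i + 1 := h.symm
        subst hj
        have hf : fH H i = fH H (i+1) :=
          (fH_eq_iff H (by omega) hjlt).mpr (iff_of_false hx hy)
        exact (nbrs_iff H H i hjlt (hSc' i (by omega) hx) hx hy).mpr (hc i hjlt hf)
      · have hj : i = j + 1 := h.symm
        subst hj
        have hf : fH H j = fH H (j+1) :=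
          (fH_eq_iff H (by omega) hilt).mpr (iff_of_false hy hx)
        exact ((nbrs_iff H H j hilt (hSc' j (by omega) hy) hy hx).mpr (hc j hilt hf)).symm

def NT (n : ℕ) (f : ℕ → Bool) : Prop := ∀ i, i + 2 < n → ¬(f i = f (i+1) ∧ f (i+1) = f (i+2))
def FD (n : ℕ) (f : ℕ → Bool) : Prop := 2 ≤ n → f 0 ≠ f 1
def LD (n : ℕ) (f : ℕ → Bool) : Prop := 2 ≤ n → f (n-2) ≠ f (n-1)
def Cst (n : ℕ) (f : ℕ → Bool) : Prop := ∀ i, i < n → f i = f 0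
def Gd (n : ℕ) (f : ℕ → Bool) : Prop := Cst n f ∨ (NT n f ∧ FD n f ∧ LD n f)

lemma claimUp {n : ℕ} {f : ℕ → Bool} (hc : Cc n f) (i : ℕ) (hi : i + 1 < n)
    (h1 : f i = f (i+1)) (hpre : i = 0 ∨ f (i-1) = f i) :
    ∀ j, i ≤ j → j < n → f j = f i := by
  intro j
  induction j using Nat.strong_induction_on with
  | _ j IH =>
    intro hij hjn
    rcases Nat.lt_or_ge j (i+2) with hj2 | hj2
    · have : j = i ∨ j = i + 1 := by omega
      rcases this with rfl | rfl
      · rfl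
      · exact h1.symm
    · obtain ⟨i', rfl⟩ : ∃ i', j = i' + 2 := ⟨j - 2, by omega⟩
      have e1 : f i' = f i := IH i' (by omega) (by omega) (by omega)
      have e2 : f (i'+1) = f i := IH (i'+1) (by omega) (by omega) (by omega)
      have hcc := hc i' (by omega) (e1.trans e2.symm)
      have hL : ¬(0 < i' ∧ f (i'-1) ≠ f i') := by
        rintro ⟨h0, hne⟩
        apply hne
        rcases Nat.eq_or_lt_of_le (show i ≤ i' by omega) with he | hlt
        · subst he
          rcases hpre with h0' | hp
          · omega
          · exact hp
        · have hx := IH (i'-1) (by omega) (by omega) (by omega)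
          rw [hx, e1]
      have hR := fun hR' => hL (hcc.mpr hR')
      by_contra hne
      exact hR ⟨hjn, fun hh => hne (hh ▸ e1 ▸ rfl)⟩

lemma claimDown {n : ℕ} {f : ℕ → Bool} (hc : Cc n f) (i : ℕ) (hi : i + 1 < n)
    (h1 : f i = f (i+1)) (hsuc : i + 2 = n ∨ f (i+2) = f (i+1)) :
    ∀ j, j ≤ i → f j = f i := by
  have key : ∀ d j, j + d = i → f j = f i := by
    intro d
    induction d using Nat.strong_induction_on with
    | _ d IH =>
      intro j hj
      rcases Nat.lt_or_ge d 2 with hd2 | hd2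
      · have hd01 : d = 0 ∨ d = 1 := by omega
        rcases hd01 with rfl | rfl
        · have : j = i := by omega
          rw [this]
        · have hcc := hc i hi h1
          have hR : ¬(i + 2 < n ∧ f (i+2) ≠ f i) := by
            rintro ⟨hlt, hne⟩
            rcases hsuc with he | he
            · omega
            · exact hne (he.trans h1.symm)
          have hL := fun hL' => hR (hcc.mp hL')
          have hmain : f (i-1) = f i := by
            by_contra hne
            exact hL ⟨by omega, hne⟩
          have hji : j = i - 1 := by omega
          rw [hji]; exact hmain
      · have e1 : f (j+1) = f i := IH (d-1) (by omega) (j+1) (by omega)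
        have e2 : f (j+2) = f i := IH (d-2) (by omega) (j+2) (by omega)
        have hcc := hc (j+1) (by omega) (e1.trans e2.symm)
        have hR : ¬(j+1+2 < n ∧ f (j+1+2) ≠ f (j+1)) := by
          rintro ⟨hlt, hne⟩
          apply hne
          rcases Nat.lt_or_ge d 3 with hd3 | hd3
          · rw [show j+1+2 = i+1 from by omega, e1]
            exact h1.symm
          · have hx := IH (d-3) (by omega) (j+3) (by omega)
            rw [show j+1+2 = j+3 from rfl, hx, e1]
        have hL := fun hL' => hR (hcc.mp hL')
        have hmain : f j = f (j+1) := by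
          by_contra hne
          exact hL ⟨by omega, fun hh => hne hh⟩
        rw [hmain, e1]
  intro j hj
  exact key (i - j) j (by omega)

lemma Cc_iff_Gd (n : ℕ) (f : ℕ → Bool) : Cc n f ↔ Gd n f := by
  constructor
  · intro hc
    by_cases hcst : Cst n f
    · exact Or.inl hcst
    · refine Or.inr ⟨?_, ?_, ?_⟩
      · intro i h3 ⟨e1, e2⟩
        apply hcst
        intro j hj
        have hup := claimUp hc (i+1) (by omega) e2 (Or.inr e1)
        have hdn := claimDown hc i (by omega) e1 (Or.inr e2.symm)
        have f0 : f 0 = f i := hdn 0 (by omega)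
        rcases Nat.lt_or_ge j (i+1) with hji | hji
        · rw [hdn j (by omega), f0]
        · rw [hup j (by omega) hj, ← e1, f0]
      · intro h2 
        by_contra hne
        apply hcst
        intro j hj
        exact claimUp hc 0 (by omega) hne (Or.inl rfl) j (by omega) hj
      · intro h2
        by_contra hne
        have he : f (n-2) = f (n-1) := hne
        apply hcst
        have he' : f (n-2) = f (n-2+1) := by
          rw [show n-2+1 = n-1 from by omega]; exact he
        have hdn := claimDown hc (n-2) (by omega) he' (Or.inl (by omega))
        intro j hj
        rcases Nat.lt_or_ge j (n-1) with hji | hji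
        · rw [hdn j (by omega), hdn 0 (by omega)]
        · rw [show j = n-1 from by omega, ← he, hdn 0 (by omega)]
  · intro hg i hi hfe
    rcases hg with hcst | ⟨nt, fd, ld⟩
    · apply iff_of_false
      · rintro ⟨h0, hne⟩
        exact hne ((hcst (i-1) (by omega)).trans (hcst i (by omega)).symm)
      · rintro ⟨h2, hne⟩
        exact hne ((hcst (i+2) (by omega)).trans (hcst i (by omega)).symm)
    · have h0 : 0 < i := by
        by_contra h0
        have : i = 0 := by omega
        subst this
        exact fd (by omega) hfe
      apply iff_of_true
      · refine ⟨h0, ?_⟩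
        intro hne
        apply nt (i-1) (by omega)
        constructor
        · rw [show i-1+1 = i from by omega]; exact hne
        · rw [show i-1+1 = i from by omega, show i-1+2 = i+1 from by omega]; exact hfe
      · have h2 : i + 2 < n := by
          rcases Nat.lt_or_ge (i+2) n with h | h
          · exact h
          · exfalso
            apply ld (by omega)
            rw [show n-2 = i from by omega, show n-1 = i+1 from by omega]
            exact hfe
        refine ⟨h2, ?_⟩
        intro hne
        exact nt i h2 ⟨hfe, hfe.symm.trans hne.symm⟩

def xt {n : ℕ} (g : Fin n → Bool) : ℕ → Bool :=
  fun i => if h : i < n then g ⟨i, h⟩ else false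

lemma xt_lt {n : ℕ} (g : Fin n → Bool) {i : ℕ} (h : i < n) : xt g i = g ⟨i, h⟩ :=
  dif_pos h

/-- prepend a bit to a tuple -/
def cns {m : ℕ} (a : Bool) (h : Fin m → Bool) : Fin (m+1) → Bool :=
  fun i => if hi : i.val = 0 then a else h ⟨i.val - 1, by omega⟩

/-- drop the first bit -/
def tl {m : ℕ} (g : Fin (m+1) → Bool) : Fin m → Bool :=
  fun i => g ⟨i.val + 1, by omega⟩

lemma cns_tl {m : ℕ} (g : Fin (m+1) → Bool) : cns (g ⟨0, by omega⟩) (tl g) = g := by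
  funext i
  unfold cns tl
  rcases Nat.eq_zero_or_pos i.val with h0 | h0
  · rw [dif_pos h0]
    congr 1
    exact (Fin.ext h0.symm)
  · rw [dif_neg (by omega)]
    congr 1
    apply Fin.ext
    simp
    omega

lemma tl_cns {m : ℕ} (a : Bool) (h : Fin m → Bool) : tl (cns a h) = h := by
  funext i
  show cns a h ⟨i.val + 1, by omega⟩ = h i
  unfold cns
  rw [dif_neg (by simp)]
  congr 1

lemma xt_cns_zero {m : ℕ} (a : Bool) (h : Fin m → Bool) :
    xt (cns a h : Fin (m+1) → Bool) 0 = a := by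
  rw [xt_lt _ (by omega)]
  unfold cns
  rw [dif_pos rfl]

lemma xt_cns_succ {m : ℕ} (a : Bool) (h : Fin m → Bool) (i : ℕ) :
    xt (cns a h : Fin (m+1) → Bool) (i+1) = xt h i := by
  rcases Nat.lt_or_ge i m with hi | hi
  · rw [xt_lt _ (show i+1 < m+1 by omega), xt_lt _ hi]
    show cns a h ⟨i+1, _⟩ = h ⟨i, hi⟩
    unfold cns
    rw [dif_neg (by simp)]
    congr 1
  · unfold xt
    rw [dif_neg (by omega), dif_neg (by omega)]

lemma xt_cns_one {m : ℕ} (a : Bool) (h : Fin m → Bool) :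
    xt (cns a h : Fin (m+1) → Bool) 1 = xt h 0 := xt_cns_succ a h 0

lemma xt_cns_two {m : ℕ} (a : Bool) (h : Fin m → Bool) :
    xt (cns a h : Fin (m+1) → Bool) 2 = xt h 1 := xt_cns_succ a h 1

lemma NT_cns {m : ℕ} (a : Bool) (h : Fin m → Bool) (hm : 2 ≤ m) :
    NT (m+1) (xt (cns a h)) ↔
      (¬(a = xt h 0 ∧ xt h 0 = xt h 1) ∧ NT m (xt h)) := by
  constructor
  · intro hnt
    constructor
    · intro ⟨e1, e2⟩
      refine hnt 0 (by omega) ⟨?_, ?_⟩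
      · show xt (cns a h) 0 = xt (cns a h) 1
        rw [xt_cns_zero, xt_cns_one]; exact e1
      · show xt (cns a h) 1 = xt (cns a h) 2
        rw [xt_cns_one, xt_cns_two]; exact e2
    · intro i hi hcon
      refine hnt (i+1) (by omega) ⟨?_, ?_⟩
      · rw [xt_cns_succ, xt_cns_succ]; exact hcon.1
      · show xt (cns a h) (i+2) = xt (cns a h) (i+3)
        rw [show i+2 = (i+1)+1 from rfl, show i+3 = (i+2)+1 from rfl, xt_cns_succ, xt_cns_succ]
        exact hcon.2
  · rintro ⟨h1, hnt⟩ i hi hcon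
    rcases i with _ | i
    · apply h1
      refine ⟨?_, ?_⟩
      · have z := xt_cns_zero a h
        have o := xt_cns_one a h
        rw [← z, ← o]; exact hcon.1
      · have o := xt_cns_one a h
        have t := xt_cns_two a h
        rw [← o, ← t]; exact hcon.2
    · refine hnt i (by omega) ⟨?_, ?_⟩
      · rw [← xt_cns_succ a h i, ← xt_cns_succ a h (i+1)]; exact hcon.1
      · rw [← xt_cns_succ a h (i+1), ← xt_cns_succ a h (i+2)]; exact hcon.2

lemma FD_cns {m : ℕ} (a : Bool) (h : Fin m → Bool) (hm : 1 ≤ m) :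
    FD (m+1) (xt (cns a h)) ↔ a ≠ xt h 0 := by
  unfold FD
  rw [xt_cns_zero, xt_cns_one]
  constructor
  · intro hf; exact hf (by omega)
  · intro hne _; exact hne

lemma LD_cns {m : ℕ} (a : Bool) (h : Fin m → Bool) (hm : 2 ≤ m) :
    LD (m+1) (xt (cns a h)) ↔ LD m (xt h) := by
  unfold LD
  have e1 : m + 1 - 2 = (m - 2) + 1 := by omega
  have e2 : m + 1 - 1 = (m - 1) + 1 := by omega
  rw [e1, e2, xt_cns_succ, xt_cns_succ]
  constructor
  · intro hf _; exact hf (by omega)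
  · intro hf _; exact hf (by omega)

lemma card_or_disj {α : Type*} [Fintype α] {p q : α → Prop} (hdisj : ∀ a, p a → q a → False) :
    Nat.card {x // p x ∨ q x} = Nat.card {x // p x} + Nat.card {x // q x} := by
  classical
  simp only [Nat.card_eq_fintype_card, Fintype.card_subtype]
  rw [← Finset.card_union_of_disjoint (by
    rw [Finset.disjoint_left]
    intro a ha hb
    simp only [Finset.mem_filter] at ha hb
    exact hdisj a ha.2 hb.2)]
  congr 1
  ext a
  simp [Finset.mem_union]

lemma R1 (m : ℕ) (hm : 2 ≤ m) :
    Nat.card {g : Fin (m+1) → Bool // NT (m+1) (xt g) ∧ FD (m+1) (xt g) ∧ LD (m+1) (xt g)} =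
    Nat.card {h : Fin m → Bool // NT m (xt h) ∧ FD m (xt h) ∧ LD m (xt h)} +
    Nat.card {h : Fin m → Bool // NT m (xt h) ∧ ¬FD m (xt h) ∧ LD m (xt h)} := by
  rw [← card_or_disj (fun h hp hq => hq.2.1 hp.2.1)]
  apply Nat.card_congr
  refine ⟨fun g => ⟨tl g.1, ?_⟩, fun h => ⟨cns (!(xt h.1 0)) h.1, ?_⟩, ?_, ?_⟩
  · obtain ⟨g, hg⟩ := g
    have hdec : g = cns (g ⟨0, by omega⟩) (tl g) := (cns_tl g).symm
    rw [hdec] at hg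
    obtain ⟨hnt, hfd, hld⟩ := hg
    rw [NT_cns _ _ hm] at hnt
    rw [LD_cns _ _ hm] at hld
    have hnt' := hnt.2
    have hld' : LD m (xt (tl g)) := hld
    rcases Classical.em (FD m (xt (tl g))) with hf | hf
    · exact Or.inl ⟨hnt', hf, hld'⟩
    · exact Or.inr ⟨hnt', hf, hld'⟩
  · obtain ⟨h, hh⟩ := h
    have hnl : NT m (xt h) ∧ LD m (xt h) := by
      rcases hh with ⟨h1, _, h3⟩ | ⟨h1, _, h3⟩ <;> exact ⟨h1, h3⟩
    refine ⟨?_, ?_, ?_⟩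
    · rw [NT_cns _ _ hm]
      exact ⟨fun hc => Bool.not_ne_self _ hc.1, hnl.1⟩
    · rw [FD_cns _ _ (by omega)]
      exact Bool.not_ne_self _
    · rw [LD_cns _ _ hm]
      exact hnl.2
  · rintro ⟨g, hg⟩
    apply Subtype.ext
    show cns (!(xt (tl g) 0)) (tl g) = g
    have h1 : xt (tl g) 0 = g ⟨1, by omega⟩ := by
      rw [xt_lt _ (show 0 < m by omega)]
      show g ⟨0+1, _⟩ = g ⟨1, _⟩
      congr 1
    have hfd := hg.2.1 (by omega)
    rw [xt_lt _ (show 0 < m+1 by omega), xt_lt _ (show 1 < m+1 by omega)] at hfd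
    have : (!(xt (tl g) 0)) = g ⟨0, by omega⟩ := by
      rw [h1]
      cases hb : g ⟨1, by omega⟩ <;> cases hb' : g ⟨0, by omega⟩ <;> simp_all
    rw [this]
    exact cns_tl g
  · rintro ⟨h, hh⟩
    apply Subtype.ext
    exact tl_cns (!(xt h 0)) h

lemma R2 (m : ℕ) (hm : 2 ≤ m) :
    Nat.card {g : Fin (m+1) → Bool // NT (m+1) (xt g) ∧ ¬FD (m+1) (xt g) ∧ LD (m+1) (xt g)} =
    Nat.card {h : Fin m → Bool // NT m (xt h) ∧ FD m (xt h) ∧ LD m (xt h)} := by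
  apply Nat.card_congr
  refine ⟨fun g => ⟨tl g.1, ?_⟩, fun h => ⟨cns (xt h.1 0) h.1, ?_⟩, ?_, ?_⟩
  · obtain ⟨g, hg⟩ := g
    have hdec : g = cns (g ⟨0, by omega⟩) (tl g) := (cns_tl g).symm
    rw [hdec] at hg
    obtain ⟨hnt, hfd, hld⟩ := hg
    rw [NT_cns _ _ hm] at hnt
    rw [FD_cns _ _ (by omega)] at hfd
    rw [LD_cns _ _ hm] at hld
    have ha : g ⟨0, by omega⟩ = xt (tl g) 0 := by
      by_contra hc
      exact hfd hc
    refine ⟨hnt.2, ?_, hld⟩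
    intro _
    intro he
    exact hnt.1 ⟨ha, he⟩
  · obtain ⟨h, hh⟩ := h
    obtain ⟨hnt, hfd, hld⟩ := hh
    refine ⟨?_, ?_, ?_⟩
    · rw [NT_cns _ _ hm]
      exact ⟨fun hc => hfd hm hc.2, hnt⟩
    · rw [FD_cns _ _ (by omega)]
      intro hc
      exact hc rfl
    · rw [LD_cns _ _ hm]
      exact hld
  · rintro ⟨g, hg⟩
    apply Subtype.ext
    show cns (xt (tl g) 0) (tl g) = g
    have h1 : xt (tl g) 0 = g ⟨1, by omega⟩ := by
      rw [xt_lt _ (show 0 < m by omega)]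
      show g ⟨0+1, _⟩ = g ⟨1, _⟩
      congr 1
    have hfd : ¬(xt g 0 ≠ xt g 1) := fun hc => hg.2.1 (fun _ => hc)
    rw [not_not, xt_lt _ (show 0 < m+1 by omega), xt_lt _ (show 1 < m+1 by omega)] at hfd
    rw [h1, ← hfd]
    exact cns_tl g
  · rintro ⟨h, hh⟩
    apply Subtype.ext
    exact tl_cns (xt h 0) h

lemma base_d : Nat.card {g : Fin 2 → Bool // NT 2 (xt g) ∧ FD 2 (xt g) ∧ LD 2 (xt g)} = 2 := by
  have e : {g : Fin 2 → Bool // NT 2 (xt g) ∧ FD 2 (xt g) ∧ LD 2 (xt g)} ≃ Bool := by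
    refine ⟨fun g => g.1 ⟨0, by omega⟩, fun b => ⟨fun i => if i.val = 0 then b else !b, ?_, ?_, ?_⟩, ?_, ?_⟩
    · intro i hi; exact absurd hi (by omega)
    · intro _
      rw [xt_lt _ (show 0 < 2 by omega), xt_lt _ (show 1 < 2 by omega)]
      simp
    · intro _
      rw [xt_lt _ (show 2-2 < 2 by omega), xt_lt _ (show 2-1 < 2 by omega)]
      simp
    · rintro ⟨g, hg⟩
      apply Subtype.ext
      funext i
      have hfd := hg.2.1 (by omega)
      rw [xt_lt _ (show 0 < 2 by omega), xt_lt _ (show 1 < 2 by omega)] at hfd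
      show (if i.val = 0 then g ⟨0, _⟩ else !(g ⟨0, _⟩)) = g i
      rcases Nat.eq_zero_or_pos i.val with h0 | h0
      · rw [if_pos h0]
        congr 1
        exact Fin.ext h0.symm
      · rw [if_neg (by omega)]
        have hi2 : i.val < 2 := i.isLt
        have : i = ⟨1, by omega⟩ := by
          apply Fin.ext
          show i.val = 1
          omega
        rw [this]
        cases hb : g ⟨1, by omega⟩ <;> cases hb' : g ⟨0, by omega⟩ <;> simp_all
    · intro b
      simp
  rw [Nat.card_congr e]
  simp [Nat.card_eq_fintype_card]

lemma base_e : Nat.card {g : Fin 2 → Bool // NT 2 (xt g) ∧ ¬FD 2 (xt g) ∧ LD 2 (xt g)} = 0 := by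
  have : IsEmpty {g : Fin 2 → Bool // NT 2 (xt g) ∧ ¬FD 2 (xt g) ∧ LD 2 (xt g)} := by
    constructor
    rintro ⟨g, _, hfd, hld⟩
    exact hfd (fun _ => hld (by omega))
  exact Nat.card_of_isEmpty

lemma dp_val : ∀ m, 2 ≤ m →
    Nat.card {g : Fin m → Bool // NT m (xt g) ∧ FD m (xt g) ∧ LD m (xt g)} = 2 * Nat.fib (m-1) ∧
    Nat.card {g : Fin m → Bool // NT m (xt g) ∧ ¬FD m (xt g) ∧ LD m (xt g)} = 2 * Nat.fib (m-2) := by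
  intro m hm
  induction m, hm using Nat.le_induction with
  | base => exact ⟨by rw [base_d]; rfl, by rw [base_e]; rfl⟩
  | succ m hm IH =>
    obtain ⟨hd, he⟩ := IH
    constructor
    · rw [R1 m hm, hd, he]
      have : Nat.fib (m-1) + Nat.fib (m-2) = Nat.fib (m+1-1) := by
        rw [show m+1-1 = (m-2)+2 from by omega, Nat.fib_add_two,
          show m-1 = (m-2)+1 from by omega]
        ring
      omega
    · rw [R2 m hm, hd]
      congr 1

lemma card_cst (n : ℕ) (hn : 0 < n) :
    Nat.card {g : Fin n → Bool // Cst n (xt g)} = 2 := by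
  have e : {g : Fin n → Bool // Cst n (xt g)} ≃ Bool := by
    refine ⟨fun g => g.1 ⟨0, hn⟩, fun b => ⟨fun _ => b, ?_⟩, ?_, ?_⟩
    · intro i hi
      rw [xt_lt _ hi, xt_lt _ hn]
    · rintro ⟨g, hg⟩
      apply Subtype.ext
      funext i
      have := hg i.val i.isLt
      rw [xt_lt _ i.isLt, xt_lt _ hn] at this
      simpa using this.symm
    · intro b
      rfl
  rw [Nat.card_congr e]
  simp [Nat.card_eq_fintype_card]

lemma J_eq_card (n : ℕ) :
    J n = Nat.card {g : Fin n → Bool // Gd n (xt g)} := by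
  classical
  unfold J
  apply Nat.card_congr
  have key : ∀ H : Finset (Fin n), fH H = xt (fun i : Fin n => decide (i ∈ H)) := by
    intro H
    funext i
    unfold fH xt
    rcases Nat.lt_or_ge i n with hi | hi
    · rw [dif_pos hi]
      simp [hi]
    · rw [dif_neg (by omega)]
      simp [hi]
  refine ⟨fun H => ⟨fun i => decide (i ∈ H.1), ?_⟩,
    fun g => ⟨Finset.univ.filter (fun i => g.1 i = true), ?_⟩, ?_, ?_⟩
  · rw [← key]
    exact (Cc_iff_Gd _ _).mp ((ccd_iff_Cc _).mp H.2)
  · rw [ccd_iff_Cc, Cc_iff_Gd]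
    have : fH (Finset.univ.filter (fun i => g.1 i = true)) = xt g.1 := by
      funext i
      unfold fH xt
      rcases Nat.lt_or_ge i n with hi | hi
      · rw [dif_pos hi]
        simp [hi]
      · rw [dif_neg (by omega)]
        simp
        omega
    rw [this]
    exact g.2
  · rintro ⟨H, hH⟩
    apply Subtype.ext
    ext i
    simp
  · rintro ⟨g, hg⟩
    apply Subtype.ext
    funext i
    simp

theorem J_fib (k : ℕ) : J (k + 1) = 2 * (Nat.fib k + 1) := by
  rw [J_eq_card]
  rcases Nat.eq_zero_or_pos k with rfl | hk
  · have hall : ∀ g : Fin 1 → Bool, Gd 1 (xt g) := by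
      intro g
      left
      intro i hi
      have : i = 0 := by omega
      subst this
      rfl
    rw [Nat.card_congr (Equiv.subtypeUnivEquiv hall)]
    simp [Nat.card_eq_fintype_card]
  · have h2 : 2 ≤ k + 1 := by omega
    unfold Gd
    rw [card_or_disj (fun g hc hp => hp.2.1 h2 ((hc 1 (by omega)).symm))]
    rw [card_cst _ (by omega), (dp_val (k+1) h2).1]
    have : k + 1 - 1 = k := rfl
    rw [this]
    ring
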